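/- Let H be a real Hilbert space and A : H → H a bounded self-adjoint linear operator satisfying γ‖v‖² ≤ ⟨Av, v⟩ ≤ Γ‖v‖² for all v ∈ H, where 0 < γ ≤ Γ; set μ := 2/(γ + Γ) and ρ := (Γ − γ)/(Γ + γ). Let f ∈ H, let S : H → H be non-expansive, and let u^α be the unique fixed point of the contraction v ↦ S(v − μ(Av − f)). Let τ_2 ∈ (0,1), u ∈ H, r ∈ H, set u_+ := S(u − μr), and assume μ‖r − (Au − f)‖ ≤ τ_2 ‖u_+ − u‖. Then: (i) ‖u_+ − u‖ ≤ ((1 + ρ)/(1 − τ_2)) ‖u − u^α‖, and (ii) ‖u_+ − u^α‖ ≤ (ρ + (1 + ρ)τ_2/(1 − τ_2)) ‖u − u^α‖. -/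

import Mathlib

open scoped RealInnerProductSpace

lemma selfadj_norm_le_of_quadratic
    {H : Type*} [NormedAddCommGroup H] [InnerProductSpace ℝ H]
    (B : H →L[ℝ] H) (hsym : ∀ x y : H, ⟪B x, y⟫ = ⟪x, B y⟫)
    (ρ : ℝ) (hρ : 0 ≤ ρ) (hq : ∀ x : H, |⟪B x, x⟫| ≤ ρ * ‖x‖ ^ 2) :
    ∀ x : H, ‖B x‖ ≤ ρ * ‖x‖ := by
  have hpol : ∀ x y : H, ⟪B x, y⟫ ≤ ρ * (‖x‖ ^ 2 + ‖y‖ ^ 2) / 2 := by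
    intro x y
    have h1 := abs_le.1 (hq (x + y))
    have h2 := abs_le.1 (hq (x - y))
    have e1 : ⟪B (x + y), x + y⟫
        = ⟪B x, x⟫ + ⟪B x, y⟫ + ⟪B y, x⟫ + ⟪B y, y⟫ := by
      simp [map_add, inner_add_left, inner_add_right]; ring
    have e2 : ⟪B (x - y), x - y⟫
        = ⟪B x, x⟫ - ⟪B x, y⟫ - ⟪B y, x⟫ + ⟪B y, y⟫ := by
      simp [map_sub, inner_sub_left, inner_sub_right]; ring
    have hs : ⟪B y, x⟫ = ⟪B x, y⟫ := by
      rw [hsym y x, real_inner_comm]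
    have hpxy : ‖x + y‖ ^ 2 = ‖x‖ ^ 2 + 2 * ⟪x, y⟫ + ‖y‖ ^ 2 := by
      rw [@norm_add_sq_real]
    have hpsxy : ‖x - y‖ ^ 2 = ‖x‖ ^ 2 - 2 * ⟪x, y⟫ + ‖y‖ ^ 2 := by
      rw [@norm_sub_sq_real]
    nlinarith [h1.2, h2.1]
  intro x
  by_cases hBx : B x = 0
  · simp [hBx]; positivity
  · have hBxn : 0 < ‖B x‖ := norm_pos_iff.2 hBx
    by_cases hx : x = 0
    · simp [hx] at hBx ⊢
    have hxn : 0 < ‖x‖ := norm_pos_iff.2 hx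
    have := hpol x ((‖x‖ / ‖B x‖) • B x)
    have hin : ⟪B x, (‖x‖ / ‖B x‖) • B x⟫ = ‖x‖ * ‖B x‖ := by
      rw [real_inner_smul_right, real_inner_self_eq_norm_sq]
      field_simp
    have hny : ‖(‖x‖ / ‖B x‖) • B x‖ = ‖x‖ := by
      rw [norm_smul, Real.norm_eq_abs, abs_div, abs_of_nonneg hxn.le,
        abs_of_nonneg hBxn.le]
      field_simp
    rw [hin, hny] at this
    have : ‖x‖ * ‖B x‖ ≤ ρ * ‖x‖ ^ 2 := by nlinarith
    nlinarith

/-- **Perturbed thresholded Richardson step.** Let `A` be bounded self-adjoint with spectrum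
in `[γ, Γ]`, `μ = 2/(γ+Γ)`, `ρ = (Γ-γ)/(Γ+γ)`, `S` non-expansive, and let `u^α` be the fixed
point of `v ↦ S(v - μ(Av - f))`. If `u₊ = S(u - μ r)` with
`μ‖r - (Au - f)‖ ≤ τ₂‖u₊ - u‖`, `τ₂ ∈ (0,1)`, then
(i) `‖u₊ - u‖ ≤ ((1+ρ)/(1-τ₂))‖u - u^α‖` and
(ii) `‖u₊ - u^α‖ ≤ (ρ + (1+ρ)τ₂/(1-τ₂))‖u - u^α‖`. -/
theorem perturbed_thresholded_richardson_step
    {H : Type*} [NormedAddCommGroup H] [InnerProductSpace ℝ H] [CompleteSpace H]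
    (A : H →L[ℝ] H) (hsa : ∀ v w : H, ⟪A v, w⟫ = ⟪v, A w⟫)
    (γ Γ : ℝ) (hγ : 0 < γ) (hγΓ : γ ≤ Γ)
    (hlow : ∀ v : H, γ * ‖v‖ ^ 2 ≤ ⟪A v, v⟫)
    (hupp : ∀ v : H, ⟪A v, v⟫ ≤ Γ * ‖v‖ ^ 2)
    (f : H) (S : H → H) (hS : ∀ v w : H, ‖S v - S w‖ ≤ ‖v - w‖)
    (uα : H) (huα : uα = S (uα - (2 / (γ + Γ)) • (A uα - f)))
    (τ₂ : ℝ) (hτ₂0 : 0 < τ₂) (hτ₂1 : τ₂ < 1)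
    (u r uplus : H) (huplus : uplus = S (u - (2 / (γ + Γ)) • r))
    (hres : (2 / (γ + Γ)) * ‖r - (A u - f)‖ ≤ τ₂ * ‖uplus - u‖) :
    ‖uplus - u‖ ≤ ((1 + (Γ - γ) / (Γ + γ)) / (1 - τ₂)) * ‖u - uα‖
    ∧ ‖uplus - uα‖
        ≤ ((Γ - γ) / (Γ + γ) + (1 + (Γ - γ) / (Γ + γ)) * τ₂ / (1 - τ₂)) * ‖u - uα‖ := by
  set μ : ℝ := 2 / (γ + Γ) with hμdef
  set ρ : ℝ := (Γ - γ) / (Γ + γ) with hρdef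
  have hsum : 0 < γ + Γ := by linarith
  have hμpos : 0 < μ := by positivity
  have hρ0 : 0 ≤ ρ := by
    apply div_nonneg <;> linarith
  have hρ1 : ρ < 1 := by
    rw [hρdef, div_lt_one (by linarith)]; linarith
  -- the operator B = I - μ A
  set B : H →L[ℝ] H := ContinuousLinearMap.id ℝ H - μ • A with hBdef
  have hBapp : ∀ x : H, B x = x - μ • A x := fun x => rfl
  have hBsym : ∀ x y : H, ⟪B x, y⟫ = ⟪x, B y⟫ := by
    intro x y
    simp only [hBapp, inner_sub_left, inner_sub_right, real_inner_smul_left,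
      real_inner_smul_right, hsa]
  have hBq : ∀ x : H, |⟪B x, x⟫| ≤ ρ * ‖x‖ ^ 2 := by
    intro x
    have h1 := hlow x
    have h2 := hupp x
    have hBx : ⟪B x, x⟫ = ‖x‖ ^ 2 - μ * ⟪A x, x⟫ := by
      simp [hBapp, inner_sub_left, real_inner_smul_left, real_inner_self_eq_norm_sq]
    have hcomm : γ + Γ = Γ + γ := add_comm γ Γ
    have hne : Γ + γ ≠ 0 := by linarith
    have hμγ : μ * γ = 1 - ρ := by
      rw [hμdef, hρdef, hcomm]; field_simp; ring
    have hμΓ : μ * Γ = 1 + ρ := by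
      rw [hμdef, hρdef, hcomm]; field_simp; ring
    have hA1 : μ * (γ * ‖x‖ ^ 2) ≤ μ * ⟪A x, x⟫ :=
      mul_le_mul_of_nonneg_left h1 hμpos.le
    have hA2 : μ * ⟪A x, x⟫ ≤ μ * (Γ * ‖x‖ ^ 2) :=
      mul_le_mul_of_nonneg_left h2 hμpos.le
    rw [abs_le, hBx]
    constructor <;> nlinarith [sq_nonneg ‖x‖]
  have hBnorm := selfadj_norm_le_of_quadratic B hBsym ρ hρ0 hBq
  -- contraction estimate for the exact map
  have hcontr : ‖(u - μ • (A u - f)) - (uα - μ • (A uα - f))‖ ≤ ρ * ‖u - uα‖ := by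
    have : (u - μ • (A u - f)) - (uα - μ • (A uα - f)) = B (u - uα) := by
      simp [hBapp, smul_sub, map_sub]; abel
    rw [this]; exact hBnorm _
  -- key estimate
  have key1 : ‖uplus - uα‖ ≤ ρ * ‖u - uα‖ + τ₂ * ‖uplus - u‖ := by
    have h0 : ‖uplus - uα‖ ≤ ‖(u - μ • r) - (uα - μ • (A uα - f))‖ := by
      have h := hS (u - μ • r) (uα - μ • (A uα - f))
      rw [← huplus, ← huα] at h; exact h
    have hdec : (u - μ • r) - (uα - μ • (A uα - f))
        = ((u - μ • (A u - f)) - (uα - μ • (A uα - f))) - μ • (r - (A u - f)) := by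
      simp [smul_sub]; abel
    have h1 : ‖(u - μ • r) - (uα - μ • (A uα - f))‖
        ≤ ρ * ‖u - uα‖ + μ * ‖r - (A u - f)‖ := by
      rw [hdec]
      calc _ ≤ ‖(u - μ • (A u - f)) - (uα - μ • (A uα - f))‖ + ‖μ • (r - (A u - f))‖ :=
            norm_sub_le _ _
        _ ≤ ρ * ‖u - uα‖ + μ * ‖r - (A u - f)‖ := by
            rw [norm_smul, Real.norm_eq_abs, abs_of_pos hμpos]
            exact add_le_add hcontr le_rfl
    calc ‖uplus - uα‖ ≤ ρ * ‖u - uα‖ + μ * ‖r - (A u - f)‖ := h0.trans h1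
      _ ≤ ρ * ‖u - uα‖ + τ₂ * ‖uplus - u‖ := by linarith [hres]
  have htri : ‖uplus - u‖ ≤ ‖uplus - uα‖ + ‖u - uα‖ := by
    calc ‖uplus - u‖ = ‖(uplus - uα) + (uα - u)‖ := by abel_nf
      _ ≤ ‖uplus - uα‖ + ‖uα - u‖ := norm_add_le _ _
      _ = ‖uplus - uα‖ + ‖u - uα‖ := by rw [norm_sub_rev uα u]
  have h1τ : 0 < 1 - τ₂ := by linarith
  have hi : ‖uplus - u‖ ≤ ((1 + ρ) / (1 - τ₂)) * ‖u - uα‖ := by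
    rw [div_mul_eq_mul_div, le_div_iff₀ h1τ]
    nlinarith [key1, htri]
  refine ⟨hi, ?_⟩
  have : ‖uplus - uα‖ ≤ ρ * ‖u - uα‖ + τ₂ * (((1 + ρ) / (1 - τ₂)) * ‖u - uα‖) := by
    nlinarith [key1]
  calc ‖uplus - uα‖ ≤ ρ * ‖u - uα‖ + τ₂ * (((1 + ρ) / (1 - τ₂)) * ‖u - uα‖) := this
    _ = (ρ + (1 + ρ) * τ₂ / (1 - τ₂)) * ‖u - uα‖ := by ring
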